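/- For each i ∈ {1, 2, 3, 4}: let φ be a conjunction of flat Σ_f-literals, i.e., literals of the form f(v) = w, v = w, or v ≠ w where v and w are variables; let V be a finite nonempty set of variables with vars(φ) ⊆ V, and let δ_V be an arrangement of V. If φ ∧ δ_V is satisfiable in some model of T_i, then there is a model A of T_i and a valuation satisfying φ ∧ δ_V such that every element of the domain of A is the value of some variable in V. (This is the key property establishing that T_i has a strong witness.) -/

import Mathlib

open FirstOrder FirstOrder.Language

/-- The signature Σ_f with a single unary function symbol `f`. -/
def Lf : FirstOrder.Language :=
  ⟨fun n => match n with | 1 => Unit | _ => Empty, fun _ => Empty⟩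

/-- The unary function symbol of `Lf`. -/
def fSymb : Lf.Functions 1 := Unit.unit

/-- The interpretation of the function symbol `f` in an `Lf`-structure. -/
def fFun (M : Type) (inst : Lf.Structure M) : M → M :=
  fun a => inst.funMap fSymb ![a]

/-- Realization of a formula, with the structure instance given explicitly. -/
def RealizeF {α : Type} (M : Type) (inst : Lf.Structure M) (φ : Lf.Formula α) (v : α → M) : Prop :=
  letI := inst
  φ.Realize v

/-- The semantic content of the formula `cycle_n(x)`. -/
def cycleProp (M : Type) (inst : Lf.Structure M) (n : ℕ) (a : M) : Prop :=
  (fFun M inst)^[n] a = a ∧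
    ∀ m : ℕ, m ∣ n → m ≠ n → 1 ≤ m → (fFun M inst)^[m] a ≠ a

/-- `M` is a model of T₁, axiomatized by `{(∃x. cycle_n(x)) → ∀x. f²(x) ≠ x : n ∈ S}`. -/
def ModelT1 (S : Set ℕ) (M : Type) (inst : Lf.Structure M) : Prop :=
  ∀ n ∈ S, (∃ a : M, cycleProp M inst n a) → ∀ a : M, fFun M inst (fFun M inst a) ≠ a

/-- `M` is a model of T₂, axiomatized by `Ax(T₁) ∪ {¬∃x. cycle₆(x)}`. -/
def ModelT2 (S : Set ℕ) (M : Type) (inst : Lf.Structure M) : Prop :=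
  ModelT1 S M inst ∧ ¬ ∃ a : M, cycleProp M inst 6 a

/-- `M` is a model of T₃, axiomatized by `Ax(T₁) ∪ {(∃x. f(x) = x) → ∀x∀y. x = y}`. -/
def ModelT3 (S : Set ℕ) (M : Type) (inst : Lf.Structure M) : Prop :=
  ModelT1 S M inst ∧ ((∃ a : M, fFun M inst a = a) → ∀ a b : M, a = b)

/-- `M` is a model of T₄, axiomatized by `Ax(T₂) ∪ Ax(T₃)`. -/
def ModelT4 (S : Set ℕ) (M : Type) (inst : Lf.Structure M) : Prop :=
  ModelT2 S M inst ∧ ModelT3 S M inst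

/-- `M` is a model of T_i, for i indexed by `Fin 4`. -/
def ModelT (S : Set ℕ) (i : Fin 4) (M : Type) (inst : Lf.Structure M) : Prop :=
  match i with
  | 0 => ModelT1 S M inst
  | 1 => ModelT2 S M inst
  | 2 => ModelT3 S M inst
  | 3 => ModelT4 S M inst

/-- `φ` is a conjunction of flat literals: literals of the form `f(v) = w`, `v = w`,
or `v ≠ w`, where `v` and `w` are variables. -/
inductive IsFlatConj {α : Type} : Lf.Formula α → Prop
  | funEq (v w : α) :
      IsFlatConj (Term.equal (Term.func fSymb ![Term.var v]) (Term.var w))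
  | varEq (v w : α) : IsFlatConj (Term.equal (Term.var v) (Term.var w))
  | varNe (v w : α) : IsFlatConj (Term.equal (Term.var v) (Term.var w)).not
  | conj (φ ψ : Lf.Formula α) : IsFlatConj φ → IsFlatConj ψ → IsFlatConj (φ ⊓ ψ)

/-- A valuation `v` satisfies the arrangement `δ_V^E` determined on the variable set `V` by
the equivalence relation `E` iff formula values agree with `E` on `V`. -/
def RealizesArrangement {α : Type} {M : Type} (E : Setoid α) (V : Finset α) (v : α → M) : Prop :=
  ∀ x ∈ V, ∀ y ∈ V, (E.r x y ↔ v x = v y)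

namespace StrongWitnessAux

noncomputable def structOf {M : Type} (F : M → M) : Lf.Structure M where
  funMap := fun {n} s x => match n, s, x with
    | 1, _, x => F (x 0)
  RelMap := fun {n} r _ => r.elim

lemma fFun_structOf {M : Type} (F : M → M) : fFun M (structOf F) = F := rfl

def ForcedPer {M : Type} (f : M → M) (W : Set M) : Prop :=
  ∃ c ∈ W, ∃ k : ℕ, 1 ≤ k ∧ f^[k] c = c ∧ ∀ j, f^[j] c ∈ W

lemma pigeon {M : Type} {f : M → M} {W : Set M} (hfin : W.Finite) {a : M} (ha : a ∈ W)
    (hall : ∀ j, f^[j] a ∈ W) : ForcedPer f W := by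
  haveI := hfin.to_subtype
  obtain ⟨i, j, hij, heq⟩ :=
    Finite.exists_ne_map_eq_of_infinite (fun j : ℕ => (⟨f^[j] a, hall j⟩ : ↥W))
  have heq' : f^[i] a = f^[j] a := congrArg Subtype.val heq
  rcases hij.lt_or_gt with h | h
  · refine ⟨f^[i] a, hall i, j - i, by omega, ?_, fun m => ?_⟩
    · rw [← Function.iterate_add_apply]
      have h2 : j - i + i = j := by omega
      rw [h2]; exact heq'.symm
    · rw [← Function.iterate_add_apply]; exact hall _
  · refine ⟨f^[j] a, hall j, i - j, by omega, ?_, fun m => ?_⟩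
    · rw [← Function.iterate_add_apply]
      have h2 : i - j + j = i := by omega
      rw [h2]; exact heq'
    · rw [← Function.iterate_add_apply]; exact hall _

lemma exists_good {M : Type} (f : M → M) (W : Set M) (hfin : W.Finite) (hne : W.Nonempty) :
    ∃ F : ↥W → ↥W,
      (∀ (a : ↥W) (h : f a.val ∈ W), F a = ⟨f a.val, h⟩) ∧
      ((∀ (a : ↥W) (k : ℕ), 1 ≤ k → F^[k] a = a → ∀ m, (F^[m] a).val = f^[m] a.val)
        ∨ (∀ (a : ↥W) (k : ℕ), 1 ≤ k → F^[k] a = a → F (F a) = a ∧ F a ≠ a)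
        ∨ (∀ a b : ↥W, a = b)) := by
  classical
  by_cases h1 : ForcedPer f W
  · -- Case 1: route free elements to a forced periodic point
    obtain ⟨c, hc, k, hk1, hkc, hcW⟩ := h1
    set F : ↥W → ↥W := fun a => if h : f a.val ∈ W then ⟨f a.val, h⟩ else ⟨c, hc⟩ with hF
    have hA : ∀ (a : ↥W) (h : f a.val ∈ W), F a = ⟨f a.val, h⟩ := by
      intro a h; simp [hF, dif_pos h]
    have hcit : ∀ j, F^[j] ⟨c, hc⟩ = ⟨f^[j] c, hcW j⟩ := by
      intro j
      induction j with
      | zero => rfl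
      | succ j ih =>
        rw [Function.iterate_succ_apply', ih, hA ⟨f^[j] c, hcW j⟩ (by
          show f (f^[j] c) ∈ W
          rw [← Function.iterate_succ_apply' f j c]; exact hcW (j+1))]
        apply Subtype.ext
        show f (f^[j] c) = f^[j+1] c
        exact (Function.iterate_succ_apply' f j c).symm
    have hforced : ∀ (a : ↥W) (k' : ℕ), 1 ≤ k' → F^[k'] a = a → f a.val ∈ W := by
      intro a k' hk' ha
      by_contra hfree
      have hFa : F a = ⟨c, hc⟩ := by simp [hF, dif_neg hfree]
      have h2 : k' = (k' - 1) + 1 := by omega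
      rw [h2, Function.iterate_succ_apply, hFa, hcit (k'-1)] at ha
      apply hfree
      rw [← ha]
      show f (f^[k'-1] c) ∈ W
      rw [← Function.iterate_succ_apply' f (k'-1) c]
      exact hcW _
    refine ⟨F, hA, Or.inl ?_⟩
    intro a k' hk' ha m
    induction m with
    | zero => rfl
    | succ m ih =>
      have hper : F^[k'] (F^[m] a) = F^[m] a := by
        rw [← Function.iterate_add_apply, add_comm, Function.iterate_add_apply, ha]
      have hf := hforced (F^[m] a) k' hk' hper
      rw [Function.iterate_succ_apply', hA _ hf]
      show f (F^[m] a).val = f^[m+1] (a.val)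
      rw [ih]
      exact (Function.iterate_succ_apply' f m a.val).symm
  · -- Case 2: no forced periodic point
    have esc : ∀ a : ↥W, ∃ j, f^[j] a.val ∉ W := by
      intro a
      by_contra h
      push_neg at h
      exact h1 (pigeon hfin a.2 h)
    obtain ⟨a₀, ha₀⟩ := hne
    obtain ⟨u₀, hu₀⟩ : ∃ u₀ : ↥W, f u₀.val ∉ W := by
      let j := Nat.find (esc ⟨a₀, ha₀⟩)
      have hj : f^[j] a₀ ∉ W := Nat.find_spec (esc ⟨a₀, ha₀⟩)
      have hj1 : 1 ≤ j := by
        rcases Nat.eq_zero_or_pos j with h | h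
        · exact absurd (show f^[j] a₀ ∈ W by rw [h]; exact ha₀) hj
        · exact h
      have hmem : f^[j-1] a₀ ∈ W := by
        by_contra h
        exact absurd h (by simpa using Nat.find_min (esc ⟨a₀, ha₀⟩) (show j - 1 < j by omega))
      refine ⟨⟨f^[j-1] a₀, hmem⟩, ?_⟩
      show f (f^[j-1] a₀) ∉ W
      rw [← Function.iterate_succ_apply' f (j-1) a₀]
      simp only [Nat.succ_eq_add_one]
      have h2 : j - 1 + 1 = j := by omega
      rw [h2]; exact hj
    by_cases hsing : ∀ b : ↥W, b = u₀
    · refine ⟨fun _ => u₀, ?_, Or.inr (Or.inr ?_)⟩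
      · intro a h
        exact (hsing ⟨f a.val, h⟩).symm
      · intro a b; rw [hsing a, hsing b]
    · push_neg at hsing
      obtain ⟨w, hw⟩ := hsing
      obtain ⟨p, hp0, hp1⟩ : ∃ p : ↥W, p ≠ u₀ ∧ (f p.val ∉ W ∨ f p.val = u₀.val) := by
        by_cases h3 : ∃ u₁ : ↥W, u₁ ≠ u₀ ∧ f u₁.val ∉ W
        · obtain ⟨u₁, h₁, h₂⟩ := h3
          exact ⟨u₁, h₁, Or.inl h₂⟩
        · push_neg at h3
          let j := Nat.find (esc w)
          have hj : f^[j] w.val ∉ W := Nat.find_spec (esc w)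
          have hj1 : 1 ≤ j := by
            rcases Nat.eq_zero_or_pos j with h | h
            · exact absurd (show f^[j] w.val ∈ W by rw [h]; exact w.2) hj
            · exact h
          have hmem : f^[j-1] w.val ∈ W := by
            by_contra h
            exact absurd h (by simpa using Nat.find_min (esc w) (show j - 1 < j by omega))
          have hbfree : f (f^[j-1] w.val) ∉ W := by
            rw [← Function.iterate_succ_apply' f (j-1) w.val]
            simp only [Nat.succ_eq_add_one]
            have h2 : j - 1 + 1 = j := by omega
            rw [h2]; exact hj
          have hbu : (⟨f^[j-1] w.val, hmem⟩ : ↥W) = u₀ := by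
            by_contra hne'
            exact hbfree (h3 _ hne')
          have hj2 : 2 ≤ j := by
            by_contra h
            have hj1' : j = 1 := by omega
            apply hw
            apply Subtype.ext
            have h4 := congrArg Subtype.val hbu
            simp only [hj1'] at h4
            simpa using h4
          have hmem2 : f^[j-2] w.val ∈ W := by
            by_contra h
            exact absurd h (by simpa using Nat.find_min (esc w) (show j - 2 < j by omega))
          refine ⟨⟨f^[j-2] w.val, hmem2⟩, ?_, Or.inr ?_⟩
          · intro hpe
            apply hu₀
            have h4 : f^[j-2] w.val = u₀.val := congrArg Subtype.val hpe
            have h5 : f (f^[j-2] w.val) = f^[j-1] w.val := by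
              rw [← Function.iterate_succ_apply' f (j-2) w.val]
              simp only [Nat.succ_eq_add_one]
              have h6 : j - 2 + 1 = j - 1 := by omega
              rw [h6]
            rw [← h4, h5]
            rw [show f^[j-1] w.val = u₀.val from congrArg Subtype.val hbu]
            exact u₀.2
          · show f (f^[j-2] w.val) = u₀.val
            rw [← Function.iterate_succ_apply' f (j-2) w.val]
            simp only [Nat.succ_eq_add_one]
            have h6 : j - 2 + 1 = j - 1 := by omega
            rw [h6]
            exact congrArg Subtype.val hbu
      -- the function with the 2-cycle {u₀, p}
      set F : ↥W → ↥W := fun a =>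
        if a = u₀ then p else if h : f a.val ∈ W then ⟨f a.val, h⟩ else u₀ with hF
      have hFu₀ : F u₀ = p := by simp [hF]
      have hA : ∀ (a : ↥W) (h : f a.val ∈ W), F a = ⟨f a.val, h⟩ := by
        intro a h
        have hau : a ≠ u₀ := fun he => hu₀ (he ▸ h)
        simp [hF, if_neg hau, dif_pos h]
      have hFp : F p = u₀ := by
        rcases hp1 with h | h
        · simp [hF, if_neg hp0, dif_neg h]
        · rw [hA p (h ▸ u₀.2)]
          exact Subtype.ext h
      have horb : ∀ s, F^[s] u₀ = u₀ ∨ F^[s] u₀ = p := by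
        intro s
        induction s with
        | zero => left; rfl
        | succ s ih =>
          rcases ih with h | h
          · right; rw [Function.iterate_succ_apply', h, hFu₀]
          · left; rw [Function.iterate_succ_apply', h, hFp]
      refine ⟨F, hA, Or.inr (Or.inl ?_)⟩
      intro a k hk ha
      have hmulit : ∀ t, F^[k*t] a = a := by
        intro t
        induction t with
        | zero => rfl
        | succ t ih =>
          rw [Nat.mul_succ, Function.iterate_add_apply, ha, ih]
      -- a is in {u₀, p} or its whole orbit avoids {u₀, p}
      have hclaim : a = u₀ ∨ a = p := by
        by_contra hno
        push_neg at hno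
        obtain ⟨hau, hap⟩ := hno
        have hnever : ∀ m, F^[m] a ≠ u₀ ∧ F^[m] a ≠ p := by
          intro m
          have hback : ∀ b : ↥W, (∃ s, F^[s] u₀ = b) → F^[m] a = b → False := by
            rintro b ⟨s, hs⟩ hb
            have hkm : m ≤ k * (m + 1) := by
              calc m ≤ m + 1 := by omega
              _ ≤ k * (m+1) := Nat.le_mul_of_pos_left _ (by omega)
            have h7 : a = F^[k*(m+1) - m] (F^[m] a) := by
              rw [← Function.iterate_add_apply]
              have h8 : k*(m+1) - m + m = k*(m+1) := by omega
              rw [h8, hmulit]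
            rw [hb, ← hs, ← Function.iterate_add_apply] at h7
            rcases horb (k*(m+1) - m + s) with h | h
            · exact hau (h7.trans h)
            · exact hap (h7.trans h)
          constructor
          · exact fun hb => hback u₀ ⟨0, rfl⟩ hb
          · exact fun hb => hback p ⟨1, hFu₀⟩ hb
        have hforced' : ∀ m, f (F^[m] a).val ∈ W := by
          intro m
          by_contra hfr
          have : F (F^[m] a) = u₀ := by
            show (if F^[m] a = u₀ then p else if h : f (F^[m] a).val ∈ W then ⟨f (F^[m] a).val, h⟩ else u₀) = u₀
            rw [if_neg (hnever m).1, dif_neg hfr]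
          exact (hnever (m+1)).1 (by rw [Function.iterate_succ_apply']; exact this)
        have hit : ∀ m, (F^[m] a).val = f^[m] a.val := by
          intro m
          induction m with
          | zero => rfl
          | succ m ih =>
            rw [Function.iterate_succ_apply', hA _ (hforced' m)]
            show f (F^[m] a).val = f^[m+1] a.val
            rw [ih]
            exact (Function.iterate_succ_apply' f m a.val).symm
        apply h1
        refine ⟨a.val, a.2, k, hk, ?_, fun j => ?_⟩
        · rw [← hit k, ha]
        · rw [← hit j]; exact (F^[j] a).2
      rcases hclaim with h | h
      · subst h
        refine ⟨by rw [hFu₀, hFp], by rw [hFu₀]; exact hp0⟩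
      · subst h
        refine ⟨by rw [hFp, hFu₀], by rw [hFp]; exact fun he => hp0 he.symm⟩




lemma vec_eq {M : Type} (a : M) : (![a] : Fin 1 → M) = fun _ => a := by
  funext i; fin_cases i; rfl

lemma realizeF_funEq {α : Type} (M : Type) (inst : Lf.Structure M) (x y : α) (v : α → M) :
    RealizeF M inst (Term.equal (Term.func fSymb ![Term.var x]) (Term.var y)) v ↔
      fFun M inst (v x) = v y := by
  letI := inst
  show Formula.Realize _ v ↔ _
  rw [Formula.realize_equal]
  simp [fFun, Term.realize, vec_eq]

lemma realizeF_varEq {α : Type} (M : Type) (inst : Lf.Structure M) (x y : α) (v : α → M) :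
    RealizeF M inst (Term.equal (Term.var x : Lf.Term α) (Term.var y)) v ↔ v x = v y := by
  letI := inst
  show Formula.Realize _ v ↔ _
  rw [Formula.realize_equal]
  simp [Term.realize]

lemma realizeF_not {α : Type} (M : Type) (inst : Lf.Structure M) (ψ : Lf.Formula α) (v : α → M) :
    RealizeF M inst ψ.not v ↔ ¬ RealizeF M inst ψ v := by
  letI := inst
  exact Formula.realize_not

lemma realizeF_inf {α : Type} (M : Type) (inst : Lf.Structure M) (ψ χ : Lf.Formula α)
    (v : α → M) : RealizeF M inst (ψ ⊓ χ) v ↔ RealizeF M inst ψ v ∧ RealizeF M inst χ v := by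
  letI := inst
  exact Formula.realize_inf

lemma free_funEq {α : Type} [DecidableEq α] (x y : α) :
    x ∈ (Term.equal (Term.func fSymb ![Term.var x]) (Term.var y) : Lf.Formula α).freeVarFinset ∧
    y ∈ (Term.equal (Term.func fSymb ![Term.var x]) (Term.var y) : Lf.Formula α).freeVarFinset := by
  constructor <;> simp [Term.equal, Term.bdEqual, BoundedFormula.freeVarFinset, Term.varFinsetLeft]

lemma free_varEq {α : Type} [DecidableEq α] (x y : α) :
    x ∈ (Term.equal (Term.var x : Lf.Term α) (Term.var y)).freeVarFinset ∧
    y ∈ (Term.equal (Term.var x : Lf.Term α) (Term.var y)).freeVarFinset := by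
  constructor <;> simp [Term.equal, Term.bdEqual, BoundedFormula.freeVarFinset, Term.varFinsetLeft]

lemma free_not {α : Type} [DecidableEq α] (ψ : Lf.Formula α) :
    ψ.freeVarFinset ⊆ ψ.not.freeVarFinset := by
  intro a ha; simpa [BoundedFormula.freeVarFinset] using ha

lemma free_inf {α : Type} [DecidableEq α] (ψ χ : Lf.Formula α) :
    ψ.freeVarFinset ⊆ (ψ ⊓ χ).freeVarFinset ∧ χ.freeVarFinset ⊆ (ψ ⊓ χ).freeVarFinset := by
  constructor <;> intro a ha <;> simp [min, BoundedFormula.freeVarFinset] at * <;> tauto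

lemma realize_transfer {α : Type} [DecidableEq α] {M : Type} (inst : Lf.Structure M)
    (W : Set M) (F : ↥W → ↥W)
    (hA : ∀ (a : ↥W) (h : fFun M inst a.val ∈ W), F a = ⟨fFun M inst a.val, h⟩)
    (v : α → M) (V : Finset α) (v' : α → ↥W) (hv' : ∀ x ∈ V, (v' x).val = v x)
    (ψ : Lf.Formula α) (hψ : IsFlatConj ψ) (hsub : ψ.freeVarFinset ⊆ V)
    (hold : RealizeF M inst ψ v) : RealizeF ↥W (structOf F) ψ v' := by
  induction hψ with
  | funEq x y =>
    have hx : x ∈ V := hsub (free_funEq x y).1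
    have hy : y ∈ V := hsub (free_funEq x y).2
    rw [realizeF_funEq] at hold ⊢
    have hmem : fFun M inst (v' x).val ∈ W := by
      rw [hv' x hx, hold, ← hv' y hy]; exact (v' y).2
    have : fFun ↥W (structOf F) (v' x) = F (v' x) := rfl
    rw [this, hA _ hmem]
    apply Subtype.ext
    show fFun M inst (v' x).val = (v' y).val
    rw [hv' x hx, hv' y hy, hold]
  | varEq x y =>
    have hx : x ∈ V := hsub (free_varEq x y).1
    have hy : y ∈ V := hsub (free_varEq x y).2
    rw [realizeF_varEq] at hold ⊢
    apply Subtype.ext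
    rw [hv' x hx, hv' y hy, hold]
  | varNe x y =>
    have hsub' := (free_not (Term.equal (Term.var x : Lf.Term α) (Term.var y))).trans hsub
    have hx : x ∈ V := hsub' (free_varEq x y).1
    have hy : y ∈ V := hsub' (free_varEq x y).2
    rw [realizeF_not, realizeF_varEq] at hold ⊢
    intro h
    apply hold
    rw [← hv' x hx, ← hv' y hy, h]
  | conj ψ χ hψ hχ ihψ ihχ =>
    rw [realizeF_inf] at hold ⊢
    exact ⟨ihψ ((free_inf ψ χ).1.trans hsub) hold.1, ihχ ((free_inf ψ χ).2.trans hsub) hold.2⟩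

lemma model_transfer (S : Set ℕ) (hS : ∀ n ∈ S, n.Prime ∧ 7 ≤ n) (i : Fin 4)
    {M : Type} (inst : Lf.Structure M) (W : Set M) (F : ↥W → ↥W)
    (hC : (∀ (a : ↥W) (k : ℕ), 1 ≤ k → F^[k] a = a →
            ∀ m, (F^[m] a).val = (fFun M inst)^[m] a.val)
        ∨ (∀ (a : ↥W) (k : ℕ), 1 ≤ k → F^[k] a = a → F (F a) = a ∧ F a ≠ a)
        ∨ (∀ a b : ↥W, a = b))
    (hold : ModelT S i M inst) : ModelT S i ↥W (structOf F) := by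
  have hT1 : ModelT1 S M inst → ModelT1 S ↥W (structOf F) := by
    intro h1 n hn hex b hb
    have hn1 : 1 ≤ n := (hS n hn).1.pos
    obtain ⟨a, ha1, ha2⟩ := hex
    have ha1' : F^[n] a = a := ha1
    have ha2' : ∀ m : ℕ, m ∣ n → m ≠ n → 1 ≤ m → F^[m] a ≠ a := ha2
    have hb2 : F^[2] b = b := hb
    rcases hC with hC1 | hC2 | hC3
    · have hiter := hC1 a n hn1 ha1'
      have hcyc : cycleProp M inst n a.val := by
        constructor
        · rw [← hiter n, ha1']
        · intro m hm hmn hm1 heq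
          exact ha2' m hm hmn hm1 (Subtype.ext (by rw [hiter m]; exact heq))
      have hnof := h1 n hn ⟨a.val, hcyc⟩ b.val
      apply hnof
      have h2 := hC1 b 2 (by omega) hb2 2
      rw [hb2] at h2
      exact h2.symm
    · obtain ⟨hc2a, hc2b⟩ := hC2 a n hn1 ha1'
      exfalso
      have heven : ∀ q, F^[2*q] a = a := by
        intro q
        induction q with
        | zero => rfl
        | succ q ih =>
          rw [Nat.mul_succ, Function.iterate_add_apply, show F^[2] a = a from hc2a, ih]
      have hodd : Odd n := (hS n hn).1.odd_of_ne_two (by have := (hS n hn).2; omega)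
      obtain ⟨q, hq⟩ := hodd
      have hfix : F a = a := by
        have h3 : F^[n] a = F a := by
          rw [hq, show 2*q+1 = 1 + 2*q by omega, Function.iterate_add_apply, heven q,
            Function.iterate_one]
        rw [← h3, ha1']
      exact hc2b hfix
    · exact absurd (hC3 (F a) a) (ha2' 1 (one_dvd n) (by have := (hS n hn).2; omega) le_rfl)
  have hT6 : (¬ ∃ a : M, cycleProp M inst 6 a) →
      ¬ ∃ b : ↥W, cycleProp ↥W (structOf F) 6 b := by
    rintro h6 ⟨a, ha1, ha2⟩
    have ha1' : F^[6] a = a := ha1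
    have ha2' : ∀ m : ℕ, m ∣ 6 → m ≠ 6 → 1 ≤ m → F^[m] a ≠ a := ha2
    rcases hC with hC1 | hC2 | hC3
    · have hiter := hC1 a 6 (by omega) ha1'
      apply h6
      refine ⟨a.val, ?_, ?_⟩
      · rw [← hiter 6, ha1']
      · intro m hm hmn hm1 heq
        exact ha2' m hm hmn hm1 (Subtype.ext (by rw [hiter m]; exact heq))
    · obtain ⟨hc2a, hc2b⟩ := hC2 a 6 (by omega) ha1'
      exact ha2' 2 (by norm_num) (by omega) (by omega) hc2a
    · exact ha2' 1 (by norm_num) (by omega) le_rfl (hC3 (F a) a)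
  have hT3 : ((∃ a : M, fFun M inst a = a) → ∀ a b : M, a = b) →
      ((∃ a : ↥W, fFun ↥W (structOf F) a = a) → ∀ a b : ↥W, a = b) := by
    rintro h3 ⟨a, ha⟩ b c
    have ha' : F a = a := ha
    rcases hC with hC1 | hC2 | hC3
    · have h := hC1 a 1 le_rfl (show F^[1] a = a from ha') 1
      rw [show F^[1] a = a from ha'] at h
      have hall := h3 ⟨a.val, h.symm⟩
      exact Subtype.ext (hall b.val c.val)
    · exact absurd ha' (hC2 a 1 le_rfl ha').2
    · exact hC3 b c
  fin_cases i
  · exact hT1 hold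
  · exact ⟨hT1 hold.1, hT6 hold.2⟩
  · exact ⟨hT1 hold.1, hT3 hold.2⟩
  · exact ⟨⟨hT1 hold.1.1, hT6 hold.1.2⟩, hT1 hold.2.1, hT3 hold.2.2⟩

end StrongWitnessAux

/-- For each i ∈ {1,2,3,4}: if `φ` is a conjunction of flat literals, `V` is a finite
nonempty set of variables containing the variables of `φ`, and `δ_V` is an arrangement of
`V` such that `φ ∧ δ_V` is satisfiable in a model of T_i, then there is a model of T_i and
a valuation satisfying `φ ∧ δ_V` in which every element of the domain is the value of some
variable in `V`. -/
theorem stmt_6 (S : Set ℕ) (hS : ∀ n ∈ S, n.Prime ∧ 7 ≤ n) (i : Fin 4)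
    (α : Type) [DecidableEq α] (φ : Lf.Formula α) (hφ : IsFlatConj φ)
    (V : Finset α) (hV : V.Nonempty) (hvars : φ.freeVarFinset ⊆ V) (E : Setoid α)
    (hsat : ∃ (M : Type) (inst : Lf.Structure M), ModelT S i M inst ∧
      ∃ v : α → M, RealizeF M inst φ v ∧ RealizesArrangement E V v) :
    ∃ (M : Type) (inst : Lf.Structure M), ModelT S i M inst ∧
      ∃ v : α → M, RealizeF M inst φ v ∧ RealizesArrangement E V v ∧
        ∀ a : M, ∃ x ∈ V, v x = a := by
  classical
  obtain ⟨M, inst, hmod, v, hreal, harr⟩ := hsat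
  set f := fFun M inst with hf
  set W : Set M := v '' ↑V with hW
  have hfin : W.Finite := V.finite_toSet.image v
  obtain ⟨x₀, hx₀⟩ := hV
  have hne : W.Nonempty := ⟨v x₀, ⟨x₀, by simpa using hx₀, rfl⟩⟩
  obtain ⟨F, hA, hC⟩ := StrongWitnessAux.exists_good f W hfin hne
  set v' : α → ↥W := fun x => if hx : x ∈ V then ⟨v x, ⟨x, by simpa using hx, rfl⟩⟩
    else ⟨v x₀, ⟨x₀, by simpa using hx₀, rfl⟩⟩ with hv'def
  have hv' : ∀ x ∈ V, (v' x).val = v x := by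
    intro x hx; simp [hv'def, dif_pos hx]
  refine ⟨↥W, StrongWitnessAux.structOf F, ?_, v', ?_, ?_, ?_⟩
  · exact StrongWitnessAux.model_transfer S hS i inst W F hC hmod
  · exact StrongWitnessAux.realize_transfer inst W F hA v V v' hv' φ hφ hvars hreal
  · intro x hx y hy
    rw [harr x hx y hy, Subtype.ext_iff, hv' x hx, hv' y hy]
  · intro a
    obtain ⟨x, hx, hvx⟩ := a.2
    exact ⟨x, by simpa using hx, Subtype.ext (by rw [hv' x (by simpa using hx), hvx])⟩
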